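/- Assume a ≠ 1 and let I₀ be an inverse marginal function. Set Φ₀(y) = I₀(a·c·y) − b·I₀(c·y) and Ψ₀(y) = y^{−L}·I₀(c·y) for y > 0, where L = ln b / ln a. Suppose Φ₀ is strictly increasing on (0,∞) and that either (a > 1 and lim_{y→∞} Ψ₀(y) = 0) or (a < 1 and lim_{y→0+} Ψ₀(y) = 0), and define I₁(y) = ((1+b)/b)·∑_{m=0}^{∞} (−1)^m · b^{−m} · I₀(a^m · c · y). Then I₁ is the unique positive solution of the functional equation: any function Ĩ : (0,∞) → (0,∞) satisfying Ĩ(a·y) + b·Ĩ(y) = (1+b)·I₀(c·y) for all y > 0 coincides with I₁ on (0,∞). In particular, I₁ is the only inverse marginal function solving the functional equation. -/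

import Mathlib

open Set Filter

noncomputable section

/-- A utility function: `C²` on `(0,∞)`, strictly increasing and strictly concave there,
satisfying the Inada conditions. -/
def IsUtility (U : ℝ → ℝ) : Prop :=
  ContDiffOn ℝ 2 U (Set.Ioi 0) ∧
  (∀ x > 0, 0 < deriv U x) ∧
  (∀ x > 0, deriv (deriv U) x < 0) ∧
  Tendsto (deriv U) (nhdsWithin 0 (Set.Ioi 0)) atTop ∧
  Tendsto (deriv U) atTop (nhds 0)

/-- An inverse marginal function: positive, `C¹` on `(0,∞)`, strictly decreasing derivative,
with `I(∞)=0` and `I(0+)=∞`. -/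
def IsInvMarginal (I : ℝ → ℝ) : Prop :=
  (∀ y > 0, 0 < I y) ∧
  ContDiffOn ℝ 1 I (Set.Ioi 0) ∧
  (∀ y > 0, deriv I y < 0) ∧
  Tendsto I atTop (nhds 0) ∧
  Tendsto I (nhdsWithin 0 (Set.Ioi 0)) atTop

/-- `I` is the inverse of the marginal `U'` on the positive reals: `I = (U')⁻¹`. -/
def InvMarginalOf (I U : ℝ → ℝ) : Prop :=
  (∀ x > 0, I (deriv U x) = x) ∧ (∀ y > 0, 0 < I y ∧ deriv U (I y) = y)

/-- `J` is the inverse function of `I` on the positive reals. -/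
def IsInverseOf (J I : ℝ → ℝ) : Prop :=
  (∀ y > 0, J (I y) = y) ∧ (∀ x > 0, 0 < J x ∧ I (J x) = x)

/-- The single-period inverse investment problem:
`U₀(x) = sup {p·U₁(x+π(u−1)) + (1−p)·U₁(x+π(d−1)) : −x/(u−1) ≤ π ≤ x/(1−d)}` for all `x > 0`. -/
def SPIIP (u d p : ℝ) (U₀ U₁ : ℝ → ℝ) : Prop :=
  ∀ x > 0, U₀ x =
    sSup ((fun pi => p * U₁ (x + pi * (u - 1)) + (1 - p) * U₁ (x + pi * (d - 1))) ''
      Set.Icc (-(x / (u - 1))) (x / (1 - d)))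

/-- Under the increasing-`Φ₀` conditions, the function `I₁` defined by the series
`((1+b)/b)·∑ (−1)^m b^{−m} I₀(a^m c y)` is the unique positive solution of the functional
equation; in particular, it is the only inverse marginal function solving it. -/
theorem stmt15
    (u d p q a b c L : ℝ)
    (hu : 1 < u) (hd0 : 0 < d) (hd1 : d < 1) (hp0 : 0 < p) (hp1 : p < 1)
    (hq : q = (1 - d) / (u - d)) (ha : a = ((1 - p) * q) / (p * (1 - q)))
    (hb : b = (1 - q) / q) (hc : c = (1 - p) / (1 - q))
    (ha1 : a ≠ 1)
    (hL : L = Real.log b / Real.log a)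
    (I₀ : ℝ → ℝ) (hI₀ : IsInvMarginal I₀)
    (hΦ : StrictMonoOn (fun y => I₀ (a * c * y) - b * I₀ (c * y)) (Set.Ioi 0))
    (hΨ : (1 < a ∧ Tendsto (fun y => y ^ (-L) * I₀ (c * y)) atTop (nhds 0)) ∨
          (a < 1 ∧ Tendsto (fun y => y ^ (-L) * I₀ (c * y)) (nhdsWithin 0 (Set.Ioi 0)) (nhds 0)))
    (I₁ : ℝ → ℝ)
    (hI₁def : ∀ y > 0, Tendsto
      (fun N => ∑ m ∈ Finset.range N,
        ((1 + b) / b) * ((-1 : ℝ) ^ m * b ^ (-(m : ℤ)) * I₀ (a ^ m * c * y)))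
      atTop (nhds (I₁ y))) :
    (∀ y > 0, I₁ (a * y) + b * I₁ y = (1 + b) * I₀ (c * y)) ∧
    (∀ y > 0, 0 < I₁ y) ∧
    (∀ Itil : ℝ → ℝ, (∀ y > 0, 0 < Itil y) →
      (∀ y > 0, Itil (a * y) + b * Itil y = (1 + b) * I₀ (c * y)) →
      ∀ y > 0, Itil y = I₁ y) ∧
    (∀ Itil : ℝ → ℝ, IsInvMarginal Itil →
      (∀ y > 0, Itil (a * y) + b * Itil y = (1 + b) * I₀ (c * y)) →
      ∀ y > 0, Itil y = I₁ y) := by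
  -- basic positivity
  have hud : (0:ℝ) < u - d := by linarith
  have hq0 : 0 < q := by rw [hq]; exact div_pos (by linarith) hud
  have hq1 : q < 1 := by rw [hq, div_lt_one hud]; linarith
  have h1q : (0:ℝ) < 1 - q := by linarith
  have ha0 : 0 < a := by
    rw [ha]; exact div_pos (mul_pos (by linarith) hq0) (mul_pos hp0 h1q)
  have hb0 : 0 < b := by rw [hb]; exact div_pos h1q hq0
  have hc0 : 0 < c := by rw [hc]; exact div_pos (by linarith) h1q
  have hbne : b ≠ 0 := ne_of_gt hb0
  -- a ^ L = b
  have halog : Real.log a ≠ 0 := by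
    intro h
    rcases Real.log_eq_zero.1 h with h' | h' | h' <;> [linarith; exact ha1 h'; linarith]
  have hab : a ^ L = b := by
    rw [hL, Real.rpow_def_of_pos ha0, mul_comm, div_mul_cancel₀ _ halog, Real.exp_log hb0]
  -- normalize the series terms: b ^ (-(m:ℤ)) = b⁻¹ ^ m
  have hzp : ∀ m : ℕ, (b:ℝ) ^ (-(m:ℤ)) = b⁻¹ ^ m := by
    intro m; rw [zpow_neg, zpow_natCast, inv_pow]
  -- the term function
  set C : ℝ := (1 + b) / b with hC
  have hC0 : 0 < C := div_pos (by linarith) hb0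
  set f : ℝ → ℕ → ℝ := fun y m => C * ((-1 : ℝ) ^ m * b⁻¹ ^ m * I₀ (a ^ m * c * y)) with hf
  set P : ℝ → ℕ → ℝ := fun y N => ∑ m ∈ Finset.range N, f y m with hP
  have hPlim : ∀ y > 0, Tendsto (P y) atTop (nhds (I₁ y)) := by
    intro y hy
    have := hI₁def y hy
    simp only [hzp] at this
    exact this
  -- Part 1 : functional equation
  have hFE : ∀ y > 0, I₁ (a * y) + b * I₁ y = (1 + b) * I₀ (c * y) := by
    intro y hy
    have hPy := hPlim y hy
    have hPay := hPlim (a * y) (mul_pos ha0 hy)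
    -- partial sums at a*y in terms of partial sums at y
    have hkey : ∀ N, P (a * y) N = -b * P y (N + 1) + b * f y 0 := by
      intro N
      induction N with
      | zero =>
        simp only [hP, Finset.sum_range_zero, zero_add, Finset.sum_range_one]
        ring
      | succ n ih =>
        have hterm : f (a * y) n = -b * f y (n + 1) := by
          simp only [hf]
          have h1 : a ^ n * c * (a * y) = a ^ (n + 1) * c * y := by ring
          rw [h1, pow_succ, pow_succ]
          field_simp
          ring_nf; simp [hbne]
        simp only [hP] at ih ⊢
        rw [Finset.sum_range_succ, ih, Finset.sum_range_succ (n := n + 1), hterm]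
        ring
    have h1 : Tendsto (fun N => P y (N + 1)) atTop (nhds (I₁ y)) :=
      hPy.comp (tendsto_add_atTop_nat 1)
    have h2 : Tendsto (P (a * y)) atTop (nhds (-b * I₁ y + b * f y 0)) :=
      (((h1.const_mul (-b)).add_const (b * f y 0)).congr (fun N => (hkey N).symm))
    have h3 : I₁ (a * y) = -b * I₁ y + b * f y 0 := tendsto_nhds_unique hPay h2
    have hf0 : f y 0 = C * I₀ (c * y) := by simp [hf]
    rw [h3, hf0, hC]
    field_simp
    ring
  -- Φ is negative on (0,∞)
  have hΦ0 : Tendsto (fun y => I₀ (a * c * y) - b * I₀ (c * y)) atTop (nhds 0) := by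
    have h1 : Tendsto (fun y => I₀ (a * c * y)) atTop (nhds 0) :=
      hI₀.2.2.2.1.comp (Tendsto.const_mul_atTop (mul_pos ha0 hc0) tendsto_id)
    have h2 : Tendsto (fun y => I₀ (c * y)) atTop (nhds 0) :=
      hI₀.2.2.2.1.comp (Tendsto.const_mul_atTop hc0 tendsto_id)
    have := h1.sub (h2.const_mul b)
    simpa using this
  have hΦneg : ∀ y > 0, I₀ (a * c * y) - b * I₀ (c * y) < 0 := by
    intro y hy
    have h1 : I₀ (a * c * (y+1)) - b * I₀ (c * (y+1)) ≤ 0 := by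
      refine ge_of_tendsto hΦ0 ?_
      filter_upwards [eventually_ge_atTop (y + 1)] with z hz
      rcases eq_or_lt_of_le hz with h | h
      · rw [← h]
      · exact le_of_lt (hΦ (by simp; linarith) (by simp; linarith) h)
    have h2 := hΦ (Set.mem_Ioi.2 hy) (Set.mem_Ioi.2 (by linarith)) (by linarith : y < y + 1)
    simp only at h2
    linarith
  -- pair sums are positive
  have hpairpos : ∀ y > 0, ∀ k : ℕ, 0 < f y (2*k) + f y (2*k+1) := by
    intro y hy k
    have hΦk := hΦneg (a ^ (2*k) * y) (mul_pos (pow_pos ha0 _) hy)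
    have h1 : a ^ (2*k) * c * y = c * (a ^ (2*k) * y) := by ring
    have h2 : a ^ (2*k+1) * c * y = a * c * (a ^ (2*k) * y) := by rw [pow_succ]; ring
    have h3 : ((-1:ℝ)) ^ (2*k) = 1 := by rw [pow_mul]; norm_num
    have h4 : ((-1:ℝ)) ^ (2*k+1) = -1 := by rw [pow_succ, h3]; norm_num
    have hsum : f y (2*k) + f y (2*k+1)
        = C * b⁻¹ ^ (2*k) *
          (I₀ (c * (a ^ (2*k) * y)) - b⁻¹ * I₀ (a * c * (a ^ (2*k) * y))) := by
      simp only [hf, h1, h2, h3, h4, pow_succ]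
      ring
    rw [hsum]
    have hBpos : 0 < C * b⁻¹ ^ (2*k) := mul_pos hC0 (pow_pos (inv_pos.2 hb0) _)
    have hlt : I₀ (a * c * (a ^ (2*k) * y)) < b * I₀ (c * (a ^ (2*k) * y)) := by linarith
    have h5 := mul_lt_mul_of_pos_left hlt (inv_pos.2 hb0)
    have h7 : b⁻¹ * (b * I₀ (c * (a ^ (2*k) * y))) = I₀ (c * (a ^ (2*k) * y)) := by
      rw [← mul_assoc, inv_mul_cancel₀ hbne, one_mul]
    have h6 : 0 < I₀ (c * (a ^ (2*k) * y)) - b⁻¹ * I₀ (a * c * (a ^ (2*k) * y)) := by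
      linarith [h5, h7]
    exact mul_pos hBpos h6
  -- Part 2 : positivity
  have hI₁pos : ∀ y > 0, 0 < I₁ y := by
    intro y hy
    have hPy := hPlim y hy
    set g : ℕ → ℝ := fun K => P y (2*K + 2) with hg
    have hglim : Tendsto g atTop (nhds (I₁ y)) :=
      hPy.comp (tendsto_atTop_atTop.2 fun n => ⟨n, fun k hk => by omega⟩)
    have hPstep : ∀ n, P y (n+1) = P y n + f y n := by
      intro n; simp [hP, Finset.sum_range_succ]
    have hgmono : Monotone g := by
      apply monotone_nat_of_le_succ
      intro K
      have h2 := hpairpos y hy (K+1)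
      have e3 : 2*(K+1) = 2*K+2 := by omega
      rw [e3] at h2
      have h1 : g (K+1) = g K + (f y (2*K+2) + f y (2*K+2+1)) := by
        have hA : g (K+1) = P y ((2*K+2+1)+1) := by
          have e4 : 2*(K+1)+2 = (2*K+2+1)+1 := by omega
          simp only [hg, e4]
        rw [hA, hPstep, hPstep, show g K = P y (2*K+2) from rfl]
        ring
      rw [h1]
      linarith
    have h0 : g 0 ≤ I₁ y := hgmono.ge_of_tendsto hglim 0
    have hg0 : g 0 = f y 0 + f y 1 := by
      simp [hg, hP, Finset.sum_range_succ]
    have := hpairpos y hy 0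
    simp only [Nat.mul_zero, Nat.zero_add] at this
    rw [hg0] at h0
    linarith
  -- the Ψ-based bound : b⁻¹ ^ m = y ^ L * (a^m * y) ^ (-L)
  have hbinv : ∀ y : ℝ, 0 < y → ∀ m : ℕ, b⁻¹ ^ m = y ^ L * (a ^ m * y) ^ (-L) := by
    intro y hy m
    have h1 : ((a:ℝ) ^ m * y) ^ (-L) = ((a:ℝ) ^ m) ^ (-L) * y ^ (-L) :=
      Real.mul_rpow (pow_pos ha0 m).le hy.le
    have h2 : ((a:ℝ) ^ m) ^ (-L) = (a ^ L)⁻¹ ^ m := by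
      rw [← Real.rpow_neg ha0.le, ← Real.rpow_natCast a m, ← Real.rpow_natCast (a ^ (-L)) m,
        ← Real.rpow_mul ha0.le, ← Real.rpow_mul ha0.le, mul_comm]
    have h3 : y ^ L * y ^ (-L) = 1 := by
      rw [← Real.rpow_add hy]; simp
    rw [h1, h2, hab]
    calc b⁻¹ ^ m = 1 * b⁻¹ ^ m := by ring
    _ = y ^ L * y ^ (-L) * b⁻¹ ^ m := by rw [h3]
    _ = y ^ L * (b⁻¹ ^ m * y ^ (-L)) := by ring
  -- Ψ along the orbit tends to 0
  have hΨorbit : ∀ y > 0, Tendsto (fun m : ℕ => (a ^ m * y) ^ (-L) * I₀ (c * (a ^ m * y)))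
      atTop (nhds 0) := by
    intro y hy
    rcases hΨ with ⟨ha1', hΨ'⟩ | ⟨ha1', hΨ'⟩
    · have harg : Tendsto (fun m : ℕ => a ^ m * y) atTop atTop :=
        (tendsto_pow_atTop_atTop_of_one_lt ha1').atTop_mul_const hy
      exact hΨ'.comp harg
    · have hbase : Tendsto (fun m : ℕ => a ^ m * y) atTop (nhds 0) := by
        have := (tendsto_pow_atTop_nhds_zero_of_lt_one ha0.le ha1').mul_const y
        simpa using this
      have harg : Tendsto (fun m : ℕ => a ^ m * y) atTop (nhdsWithin 0 (Set.Ioi 0)) :=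
        tendsto_nhdsWithin_of_tendsto_nhds_of_eventually_within _ hbase
          (Eventually.of_forall fun m => mul_pos (pow_pos ha0 m) hy)
      exact hΨ'.comp harg
  -- Part 3 : uniqueness among positive solutions
  have huniq : ∀ Itil : ℝ → ℝ, (∀ y > 0, 0 < Itil y) →
      (∀ y > 0, Itil (a * y) + b * Itil y = (1 + b) * I₀ (c * y)) →
      ∀ y > 0, Itil y = I₁ y := by
    intro It hpos hfe y hy
    have hPy := hPlim y hy
    -- the difference
    set D : ℝ → ℝ := fun z => It z - I₁ z with hD
    have hDrec : ∀ z > 0, D (a * z) = -b * D z := by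
      intro z hz
      have h1 := hfe z hz
      have h2 := hFE z hz
      simp only [hD]
      linarith
    have hay : ∀ m : ℕ, 0 < a ^ m * y := fun m => mul_pos (pow_pos ha0 m) hy
    have hiter : ∀ m : ℕ, D y = (-1:ℝ) ^ m * b⁻¹ ^ m * D (a ^ m * y) := by
      intro m
      induction m with
      | zero => simp
      | succ n ih =>
        have h1 : a ^ (n+1) * y = a * (a ^ n * y) := by rw [pow_succ]; ring
        rw [h1, hDrec _ (hay n), ih, pow_succ, pow_succ]
        field_simp
    -- tail identity : I₁ (a^m*y) = (-b)^m * (I₁ y - P y m)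
    have htail : ∀ m : ℕ, I₁ (a ^ m * y) = (-b) ^ m * (I₁ y - P y m) := by
      intro m
      have hQ := hPlim (a ^ m * y) (hay m)
      have hshift : ∀ N, P (a ^ m * y) N = (-b) ^ m * (P y (m + N) - P y m) := by
        intro N
        induction N with
        | zero => simp [hP]
        | succ n ih =>
          have hterm : f (a ^ m * y) n = (-b) ^ m * f y (m + n) := by
            simp only [hf]
            have h1 : a ^ n * c * (a ^ m * y) = a ^ (m + n) * c * y := by
              rw [pow_add]; ring
            rw [h1]
            have hnb : ((-b:ℝ)) ^ m = (-1) ^ m * b ^ m := by rw [neg_pow]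
            rw [hnb]
            simp only [pow_add]
            have hE : ((-1:ℝ)) ^ m * ((-1:ℝ)) ^ m = 1 := by
              rw [← mul_pow]; norm_num
            have hB : b ^ m * b⁻¹ ^ m = 1 := by
              rw [← mul_pow, mul_inv_cancel₀ hbne, one_pow]
            linear_combination
              (-(C * ((-1:ℝ)) ^ n * b⁻¹ ^ n * I₀ (a ^ m * a ^ n * c * y))) * hB -
              ((C * ((-1:ℝ)) ^ n * b⁻¹ ^ n * I₀ (a ^ m * a ^ n * c * y)) *
                (b ^ m * b⁻¹ ^ m)) * hE
          simp only [hP] at ih ⊢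
          rw [Finset.sum_range_succ, ih, hterm]
          have : m + (n + 1) = (m + n) + 1 := by ring
          rw [this, Finset.sum_range_succ]
          ring
      have h2 : Tendsto (fun N => P y (m + N)) atTop (nhds (I₁ y)) := by
        have := hPy.comp (tendsto_add_atTop_nat m)
        simpa [Function.comp_def, Nat.add_comm] using this
      have h3 : Tendsto (P (a ^ m * y)) atTop (nhds ((-b) ^ m * (I₁ y - P y m))) :=
        (((h2.sub_const (P y m)).const_mul _).congr (fun N => (hshift N).symm))
      exact tendsto_nhds_unique hQ h3
    -- the two bounds
    have hbound : ∀ m : ℕ, |D y| ≤ b⁻¹ ^ m * It (a ^ m * y) + |I₁ y - P y m| := by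
      intro m
      have h1 : |D y| = b⁻¹ ^ m * |D (a ^ m * y)| := by
        rw [hiter m, abs_mul, abs_mul, abs_pow, abs_pow, abs_neg, abs_one, one_pow, one_mul,
          abs_of_pos (inv_pos.2 hb0)]
      have h2 : |D (a ^ m * y)| ≤ It (a ^ m * y) + |I₁ (a ^ m * y)| := by
        calc |D (a ^ m * y)| ≤ |It (a ^ m * y)| + |I₁ (a ^ m * y)| := abs_sub _ _
        _ = It (a ^ m * y) + |I₁ (a ^ m * y)| := by
            rw [abs_of_pos (hpos _ (hay m))]
      have h3 : b⁻¹ ^ m * |I₁ (a ^ m * y)| = |I₁ y - P y m| := by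
        rw [htail m, abs_mul, abs_pow, abs_neg, abs_of_pos hb0]
        rw [← mul_assoc, ← mul_pow, inv_mul_cancel₀ hbne, one_pow, one_mul]
      calc |D y| = b⁻¹ ^ m * |D (a ^ m * y)| := h1
      _ ≤ b⁻¹ ^ m * (It (a ^ m * y) + |I₁ (a ^ m * y)|) :=
          mul_le_mul_of_nonneg_left h2 (pow_nonneg (inv_pos.2 hb0).le m)
      _ = b⁻¹ ^ m * It (a ^ m * y) + b⁻¹ ^ m * |I₁ (a ^ m * y)| := by ring
      _ = b⁻¹ ^ m * It (a ^ m * y) + |I₁ y - P y m| := by rw [h3]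
    -- first summand tends to 0
    have hlim1 : Tendsto (fun m : ℕ => b⁻¹ ^ m * It (a ^ m * y)) atTop (nhds 0) := by
      have hub : ∀ m : ℕ, b⁻¹ ^ m * It (a ^ m * y) ≤
          (C * y ^ L) * ((a ^ m * y) ^ (-L) * I₀ (c * (a ^ m * y))) := by
        intro m
        have h1 : It (a ^ m * y) ≤ C * I₀ (c * (a ^ m * y)) := by
          have hfe' := hfe (a ^ m * y) (hay m)
          have hp1' := hpos (a * (a ^ m * y)) (mul_pos ha0 (hay m))
          rw [hC, div_mul_eq_mul_div, le_div_iff₀ hb0]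
          nlinarith
        have h2 : b⁻¹ ^ m * It (a ^ m * y) ≤ b⁻¹ ^ m * (C * I₀ (c * (a ^ m * y))) :=
          mul_le_mul_of_nonneg_left h1 (pow_nonneg (inv_pos.2 hb0).le m)
        calc b⁻¹ ^ m * It (a ^ m * y) ≤ b⁻¹ ^ m * (C * I₀ (c * (a ^ m * y))) := h2
        _ = (C * y ^ L) * ((a ^ m * y) ^ (-L) * I₀ (c * (a ^ m * y))) := by
            rw [hbinv y hy m]; ring
      have hlb : ∀ m : ℕ, 0 ≤ b⁻¹ ^ m * It (a ^ m * y) := fun m =>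
        le_of_lt (mul_pos (pow_pos (inv_pos.2 hb0) m) (hpos _ (hay m)))
      have hg0 : Tendsto (fun m : ℕ => (C * y ^ L) * ((a ^ m * y) ^ (-L) * I₀ (c * (a ^ m * y))))
          atTop (nhds 0) := by
        have := (hΨorbit y hy).const_mul (C * y ^ L)
        simpa using this
      exact squeeze_zero hlb hub hg0
    have hlim2 : Tendsto (fun m : ℕ => |I₁ y - P y m|) atTop (nhds 0) := by
      have h := (hPy.const_sub (I₁ y)).abs
      simpa using h
    have hlim : Tendsto (fun m : ℕ => b⁻¹ ^ m * It (a ^ m * y) + |I₁ y - P y m|)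
        atTop (nhds 0) := by
      have := hlim1.add hlim2
      simpa using this
    have hfinal : |D y| ≤ 0 := ge_of_tendsto hlim (Eventually.of_forall hbound)
    have : D y = 0 := abs_nonpos_iff.1 hfinal
    simpa [hD, sub_eq_zero] using this
  refine ⟨hFE, hI₁pos, huniq, ?_⟩
  intro It hIt hfe y hy
  exact huniq It hIt.1 hfe y hy
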